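/- arXiv:math/9908044 — 2 statements merged into one kernel-verified Lean document; each statement's English description precedes it below -/
import Mathlib

section
/- Define F(x, α) = ((√3 + 5α)/(2α))·exp(α·x) for α > 0. For every fixed x > 0 there exists a unique α₀ > 0 satisfying x·α₀·(√3 + 5α₀) = √3, and for every α > 0 one has F(x, α) ≥ F(x, α₀). That is, the family of scaling-law curves possesses a lower envelope, obtained for each x > 0 by minimizing F(x, ·) over α > 0, and the minimum is attained at the unique positive root α₀ of x·α·(√3 + 5α) = √3. -/
/-- For each fixed `x > 0` there is a unique `α₀ > 0` with
`x·α₀·(√3 + 5α₀) = √3`, and `F(x, ·)` attains its minimum over `α > 0` there,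
where `F(x, α) = ((√3 + 5α)/(2α))·exp(α·x)`. -/
theorem envelope_is_lower_envelope (x : ℝ) (hx : 0 < x) :
    (∃! α₀ : ℝ, 0 < α₀ ∧ x * α₀ * (Real.sqrt 3 + 5 * α₀) = Real.sqrt 3) ∧
    (∀ α₀ : ℝ, 0 < α₀ → x * α₀ * (Real.sqrt 3 + 5 * α₀) = Real.sqrt 3 →
      ∀ α : ℝ, 0 < α →
        ((Real.sqrt 3 + 5 * α₀) / (2 * α₀)) * Real.exp (α₀ * x) ≤
          ((Real.sqrt 3 + 5 * α) / (2 * α)) * Real.exp (α * x)) := by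
  have hs : 0 < Real.sqrt 3 := by positivity
  set s := Real.sqrt 3 with hsdef
  set g : ℝ → ℝ := fun a => x * a * (s + 5 * a) with hgdef
  have gmono : ∀ a b : ℝ, 0 < a → a < b → g a < g b := by
    intro a b ha hab
    simp only [hgdef]
    nlinarith [mul_pos (mul_pos hx (sub_pos.2 hab)) (by nlinarith : (0:ℝ) < s + 5*a + 5*b)]
  set F : ℝ → ℝ := fun a => ((s + 5 * a) / (2 * a)) * Real.exp (a * x) with hFdef
  have hF : ∀ a : ℝ, 0 < a →
      HasDerivAt F ((Real.exp (a * x) / (2 * a ^ 2)) * (g a - s)) a := by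
    intro a ha
    have h1 : HasDerivAt (fun a : ℝ => (s + 5 * a) / (2 * a)) (-s / (2 * a ^ 2)) a := by
      have hnum : HasDerivAt (fun a : ℝ => s + 5 * a) 5 a := by
        simpa using ((hasDerivAt_id a).const_mul 5).const_add s
      have hden : HasDerivAt (fun a : ℝ => 2 * a) 2 a := by
        simpa using (hasDerivAt_id a).const_mul 2
      have := hnum.div hden (by positivity)
      refine this.congr_deriv ?_
      field_simp
      ring
    have h2 : HasDerivAt (fun a : ℝ => Real.exp (a * x)) (Real.exp (a * x) * x) a := by
      simpa using ((hasDerivAt_id a).mul_const x).exp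
    have := h1.mul h2
    refine this.congr_deriv ?_
    simp only [hgdef]
    field_simp
    ring
  have hcontF : ∀ a : ℝ, 0 < a → ContinuousAt F a := fun a ha => (hF a ha).continuousAt
  constructor
  · -- existence and uniqueness
    have hcg : ContinuousOn g (Set.Icc 0 (1 / x)) := by
      apply Continuous.continuousOn; simp only [hgdef]; continuity
    have h01 : (0:ℝ) ≤ 1 / x := by positivity
    have hivt := intermediate_value_Ioo h01 hcg
    have hg0 : g 0 = 0 := by simp [hgdef]
    have hg1 : g (1 / x) = s + 5 / x := by
      simp only [hgdef]; field_simp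
    have hmem : s ∈ Set.Ioo (g 0) (g (1 / x)) := by
      rw [hg0, hg1]
      constructor
      · exact hs
      · have : 0 < 5 / x := by positivity
        linarith
    obtain ⟨α₀, hα₀mem, hα₀eq⟩ := hivt hmem
    refine ⟨α₀, ⟨hα₀mem.1, hα₀eq⟩, ?_⟩
    rintro b ⟨hb, hbeq⟩
    by_contra hne
    rcases lt_or_gt_of_ne hne with h | h
    · have := gmono b α₀ hb h
      simp only [hgdef] at this
      rw [hbeq, show x * α₀ * (s + 5 * α₀) = s from hα₀eq] at this
      exact lt_irrefl _ this
    · have := gmono α₀ b hα₀mem.1 h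
      simp only [hgdef] at this
      rw [hbeq, show x * α₀ * (s + 5 * α₀) = s from hα₀eq] at this
      exact lt_irrefl _ this
  · -- minimality
    intro α₀ hα₀ hα₀eq α hα
    rcases lt_trichotomy α α₀ with h | h | h
    · -- α < α₀ : F strictly anti on [α, α₀]
      have hanti : StrictAntiOn F (Set.Icc α α₀) := by
        apply strictAntiOn_of_deriv_neg (convex_Icc _ _)
        · intro a ha
          exact (hcontF a (lt_of_lt_of_le hα ha.1)).continuousWithinAt
        · intro a ha
          rw [interior_Icc] at ha
          have ha0 : 0 < a := lt_trans hα ha.1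
          rw [(hF a ha0).deriv]
          have hgs : g a < s := by
            have := gmono a α₀ ha0 ha.2
            rwa [show g α₀ = s from hα₀eq] at this
          have : Real.exp (a * x) / (2 * a ^ 2) > 0 := by positivity
          nlinarith
      have := hanti (Set.mem_Icc.2 ⟨le_refl α, le_of_lt h⟩)
        (Set.mem_Icc.2 ⟨le_of_lt h, le_refl α₀⟩) h
      exact le_of_lt this
    · rw [h]
    · -- α₀ < α : F strictly mono on [α₀, α]
      have hmono : StrictMonoOn F (Set.Icc α₀ α) := by
        apply strictMonoOn_of_deriv_pos (convex_Icc _ _)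
        · intro a ha
          exact (hcontF a (lt_of_lt_of_le hα₀ ha.1)).continuousWithinAt
        · intro a ha
          rw [interior_Icc] at ha
          have ha0 : 0 < a := lt_trans hα₀ ha.1
          rw [(hF a ha0).deriv]
          have hgs : s < g a := by
            have := gmono α₀ a hα₀ ha.1
            rwa [show g α₀ = s from hα₀eq] at this
          have : Real.exp (a * x) / (2 * a ^ 2) > 0 := by positivity
          nlinarith
      have := hmono (Set.mem_Icc.2 ⟨le_refl α₀, le_of_lt h⟩)
        (Set.mem_Icc.2 ⟨le_of_lt h, le_refl α⟩) h
      exact le_of_lt this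
end

section
/- Define x(α) = √3/(α·(√3 + 5α)) and y(α) = ((√3 + 5α)/(2α))·exp(√3/(√3 + 5α)) for α > 0. Then for every α > 0: (i) y(α) = F(x(α), α) where F(x, α) = ((√3 + 5α)/(2α))·exp(α·x), so the point (x(α), y(α)) lies on the family curve with parameter α; and (ii) the envelope curve α ↦ (x(α), y(α)) is tangent there to that family curve, i.e., y′(α) = (α·y(α))·x′(α), where α·y(α) = ∂F/∂x at (x(α), α). -/
/-- With `x(α) = √3/(α·(√3 + 5α))`, `y(α) = ((√3 + 5α)/(2α))·exp(√3/(√3 + 5α))`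
and `F(x, α) = ((√3 + 5α)/(2α))·exp(α·x)`: the envelope point `(x(α), y(α))`
lies on the family curve with parameter `α`, and the envelope is tangent there
to the family curve, i.e. `y′(α) = (α·y(α))·x′(α)`. -/
theorem envelope_on_curve_and_tangent (α : ℝ) (hα : 0 < α) :
    let xfun : ℝ → ℝ := fun a => Real.sqrt 3 / (a * (Real.sqrt 3 + 5 * a))
    let yfun : ℝ → ℝ := fun a =>
      ((Real.sqrt 3 + 5 * a) / (2 * a)) * Real.exp (Real.sqrt 3 / (Real.sqrt 3 + 5 * a))
    yfun α = ((Real.sqrt 3 + 5 * α) / (2 * α)) * Real.exp (α * xfun α) ∧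
    deriv yfun α = (α * yfun α) * deriv xfun α := by
  intro xfun yfun
  have hs : (0:ℝ) < Real.sqrt 3 := Real.sqrt_pos.mpr (by norm_num)
  set s := Real.sqrt 3 with hs_def
  have hα0 : α ≠ 0 := ne_of_gt hα
  have h1 : s + 5 * α ≠ 0 := by positivity
  have h2 : α * (s + 5 * α) ≠ 0 := mul_ne_zero hα0 h1
  have hx : α * xfun α = s / (s + 5 * α) := by
    simp only [xfun]
    rw [hs_def]
    field_simp
  constructor
  · simp only [yfun, hx, hs_def]
  · have h5 : HasDerivAt (fun a : ℝ => s + 5 * a) 5 α := by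
      simpa using ((hasDerivAt_id α).const_mul 5).const_add s
    have hden : HasDerivAt (fun a : ℝ => a * (s + 5 * a)) (1 * (s + 5*α) + α * 5) α :=
      (hasDerivAt_id α).mul h5
    have hxd : HasDerivAt xfun
        ((0 * (α * (s+5*α)) - s * (1 * (s + 5*α) + α * 5)) / (α * (s+5*α))^2) α :=
      (hasDerivAt_const α s).div hden h2
    have h2a : HasDerivAt (fun a : ℝ => 2 * a) 2 α := by
      simpa using (hasDerivAt_id α).const_mul 2
    have hu : HasDerivAt (fun a : ℝ => (s + 5*a)/(2*a)) ((5 * (2*α) - (s+5*α) * 2)/(2*α)^2) α :=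
      h5.div h2a (by positivity)
    have hv : HasDerivAt (fun a : ℝ => Real.exp (s / (s + 5*a)))
        (Real.exp (s/(s+5*α)) * ((0 * (s+5*α) - s * 5)/(s+5*α)^2)) α :=
      ((hasDerivAt_const α s).div h5 h1).exp
    have hyd : HasDerivAt yfun
        (((5 * (2*α) - (s+5*α) * 2)/(2*α)^2) * Real.exp (s/(s+5*α)) +
          ((s+5*α)/(2*α)) * (Real.exp (s/(s+5*α)) * ((0 * (s+5*α) - s * 5)/(s+5*α)^2))) α :=
      hu.mul hv
    rw [hyd.deriv, hxd.deriv]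
    simp only [yfun]
    field_simp
    ring
end
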